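/- Let β, γ, μ > 0 and α ∈ (0,1], and let x* = (1/(2β))[(β - (γ+μ)) + √((β - (γ+μ))² + 4αμβ)] be the positive equilibrium of the single-class SIS model with infective inflow. Then x* > α if and only if 1 - γ/β > α; x* < α iff 1 - γ/β < α; and x* = α iff 1 - γ/β = α. -/

import Mathlib

/-- For the positive SIS equilibrium
`x* = (1/(2β))[(β-(γ+μ)) + √((β-(γ+μ))² + 4αμβ)]`:
`x* > α ↔ 1 - γ/β > α`, `x* < α ↔ 1 - γ/β < α`, and `x* = α ↔ 1 - γ/β = α`. -/
theorem stmt_13 (β γ μ α : ℝ) (hβ : 0 < β) (hγ : 0 < γ) (hμ : 0 < μ)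
    (hα : α ∈ Set.Ioc (0 : ℝ) 1)
    (xstar : ℝ)
    (hx : xstar = (1 / (2 * β)) *
      ((β - (γ + μ)) + Real.sqrt ((β - (γ + μ)) ^ 2 + 4 * α * μ * β))) :
    (α < xstar ↔ α < 1 - γ / β) ∧
    (xstar < α ↔ 1 - γ / β < α) ∧
    (xstar = α ↔ 1 - γ / β = α) := by
  obtain ⟨hα0, hα1⟩ := hα
  subst hx
  set b := β - (γ + μ) with hb
  set s := Real.sqrt (b ^ 2 + 4 * α * μ * β) with hsdef
  have hs0 : 0 ≤ s := Real.sqrt_nonneg _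
  have hs2 : s ^ 2 = b ^ 2 + 4 * α * μ * β := Real.sq_sqrt (by positivity)
  have hc : β * (1 - γ / β) = β - γ := by field_simp
  have h2β : (0 : ℝ) < 2 * β := by linarith
  have h1 : α < 1 - γ / β → α < (1 / (2 * β)) * (b + s) := by
    intro h
    have hst : 2 * β * α - b < s := by
      nlinarith [mul_pos hβ hα0, sq_nonneg (s + (2 * β * α - b)),
        mul_pos hβ (sub_pos.mpr h)]
    rw [one_div_mul_eq_div, lt_div_iff₀ h2β]
    linarith
  have h2 : 1 - γ / β < α → (1 / (2 * β)) * (b + s) < α := by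
    intro h
    have hst : s < 2 * β * α - b := by
      nlinarith [mul_pos hβ hα0, sq_nonneg (s - (2 * β * α - b)),
        mul_pos hβ (sub_pos.mpr h), mul_pos (mul_pos hβ hα0) hμ]
    rw [one_div_mul_eq_div, div_lt_iff₀ h2β]
    linarith
  have h3 : 1 - γ / β = α → (1 / (2 * β)) * (b + s) = α := by
    intro h
    have hst : s = 2 * β * α - b := by
      have hβα : β * α = β - γ := by rw [← h]; exact hc
      have h1' : s ^ 2 = (2 * β * α - b) ^ 2 := by nlinarith [mul_pos hβ hα0]
      have ht0 : 0 < 2 * β * α - b := by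
        nlinarith [mul_pos (mul_pos hβ hα0) hμ, mul_pos hβ hα0]
      nlinarith
    rw [hst]
    field_simp
    ring
  refine ⟨⟨fun h => ?_, h1⟩, ⟨fun h => ?_, h2⟩, ⟨fun h => ?_, h3⟩⟩
  · rcases lt_trichotomy α (1 - γ / β) with h' | h' | h'
    · exact h'
    · exact absurd (h3 h'.symm) (by linarith)
    · exact absurd (h2 h') (by linarith)
  · rcases lt_trichotomy (1 - γ / β) α with h' | h' | h'
    · exact h'
    · exact absurd (h3 h') (by linarith)
    · exact absurd (h1 h') (by linarith)
  · rcases lt_trichotomy (1 - γ / β) α with h' | h' | h'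
    · exact absurd (h2 h') (by linarith)
    · exact h'
    · exact absurd (h1 h') (by linarith)
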